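/- Let p₀, l, c be positive integers, ε₁ > 0, r₀ = (r₁,…,r_c) ∈ ℝ^c such that 1, r₁, …, r_c are linearly independent over ℚ, and e ∈ ℝ^c a nonzero vector. Then there exist a positive integer n₀ and a point r₀' ∈ ℝ^c such that: (1) p₀ divides n₀; (2) n₀·r₀' ∈ l·ℤ^c; (3) ‖r₀ - r₀'‖_∞ < ε₁/n₀; and (4) ‖(r₀ - r₀')/‖r₀ - r₀'‖_∞ - e/‖e‖_∞‖_∞ < ε₁. -/

import Mathlib

open scoped BigOperators

open Complex Finset Real

noncomputable def ee (x : ℝ) : ℂ := Complex.exp ((x : ℂ) * (2 * Real.pi * Complex.I))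

lemma ee_add (x y : ℝ) : ee (x + y) = ee x * ee y := by
  simp [ee, add_mul, Complex.exp_add]

lemma ee_zero : ee 0 = 1 := by simp [ee]

lemma ee_nat_mul (n : ℕ) (x : ℝ) : ee (n * x) = ee x ^ n := by
  simp only [ee, ← Complex.exp_nat_mul]; push_cast; ring_nf

lemma ee_abs (x : ℝ) : ‖ee x‖ = 1 := by
  simp only [ee]
  rw [show (x : ℂ) * (2 * Real.pi * Complex.I) = ((x * (2*Real.pi) : ℝ) : ℂ) * Complex.I by push_cast; ring]
  rw [Complex.norm_exp_ofReal_mul_I]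

lemma ee_eq_one_iff (x : ℝ) : ee x = 1 ↔ ∃ k : ℤ, x = k := by
  rw [ee, Complex.exp_eq_one_iff]
  constructor
  · rintro ⟨n, h⟩
    refine ⟨n, ?_⟩
    have h2 : (2 * (Real.pi:ℂ) * Complex.I) ≠ 0 := by
      simp [Real.pi_ne_zero, Complex.I_ne_zero]
    have : (x : ℂ) = n := mul_right_cancel₀ h2 h
    exact_mod_cast this
  · rintro ⟨k, rfl⟩
    exact ⟨k, by push_cast; ring⟩

lemma ee_sum {ι : Type*} (s : Finset ι) (f : ι → ℝ) :
    ee (∑ i ∈ s, f i) = ∏ i ∈ s, ee (f i) := by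
  simp [ee, Finset.sum_mul, Complex.exp_sum]

lemma cos_complex (y : ℝ) :
    ((Real.cos (Real.pi * y) : ℝ) : ℂ) = (ee (y/2) + ee (-(y/2))) / 2 := by
  rw [Complex.ofReal_cos, Complex.cos, ee, ee]
  push_cast
  ring_nf

lemma cos_pow_expand (p : ℕ) (y : ℝ) :
    ((Real.cos (Real.pi * y) ^ (2*p) : ℝ) : ℂ) =
      ∑ j ∈ range (2*p+1), (Nat.choose (2*p) j : ℂ) * (4:ℂ)⁻¹ ^ p * ee (((j:ℝ) - p) * y) := by
  rw [Complex.ofReal_pow, cos_complex, div_pow, add_pow, Finset.sum_div]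
  refine Finset.sum_congr rfl fun j hj => ?_
  rw [Finset.mem_range] at hj
  have hj' : j ≤ 2*p := by omega
  have : ee (y/2) ^ j * ee (-(y/2)) ^ (2*p - j) = ee (((j:ℝ) - p) * y) := by
    rw [ee, ee, ee, ← Complex.exp_nat_mul, ← Complex.exp_nat_mul, ← Complex.exp_add]
    congr 1
    have : ((2*p - j : ℕ) : ℂ) = 2*(p:ℂ) - j := by
      push_cast [Nat.cast_sub hj']; ring
    rw [this]
    push_cast
    ring
  rw [this]
  have h4 : ((2:ℂ)^(2*p)) = 4^p := by rw [pow_mul]; norm_num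
  rw [h4]
  field_simp
  rw [mul_assoc, ← mul_pow]; norm_num

/-- from `cos(πε)² < cos(πd)²` conclude `d` is within `ε` of an integer. -/
lemma round_close {d ε : ℝ} (hε : 0 < ε) (hε2 : ε ≤ 1/2)
    (h : Real.cos (Real.pi * ε) ^ 2 < Real.cos (Real.pi * d) ^ 2) :
    |d - round d| < ε := by
  set u : ℝ := d - round d with hu
  have hu2 : |u| ≤ 1/2 := abs_sub_round d
  have hper : Real.cos (Real.pi * d) ^ 2 = Real.cos (Real.pi * |u|) ^ 2 := by
    rw [Real.cos_sq, Real.cos_sq]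
    congr 1
    rw [show 2 * (Real.pi * d) = 2 * (Real.pi * u) + (round d : ℤ) * (2 * Real.pi) by
      rw [hu]; ring]
    rw [Real.cos_add_int_mul_two_pi]
    rw [show (2:ℝ) * (Real.pi * |u|) = |2 * (Real.pi * u)| by
      rw [abs_mul, abs_mul, _root_.abs_two, _root_.abs_of_nonneg Real.pi_nonneg]]
    rw [Real.cos_abs]
  rw [hper] at h
  by_contra hcon
  push_neg at hcon
  have h1 : Real.cos (Real.pi * |u|) ≤ Real.cos (Real.pi * ε) := by
    apply Real.cos_le_cos_of_nonneg_of_le_pi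
    · positivity
    · nlinarith [Real.pi_pos, abs_nonneg u]
    · nlinarith [Real.pi_pos]
  have h2 : 0 ≤ Real.cos (Real.pi * |u|) := by
    apply Real.cos_nonneg_of_mem_Icc
    constructor
    · nlinarith [Real.pi_pos, abs_nonneg u]
    · nlinarith [Real.pi_pos, abs_nonneg u]
  nlinarith

set_option maxHeartbeats 2000000 in
theorem kron (c : ℕ) (x t : Fin c → ℝ)
    (hx : ∀ (a : Fin c → ℤ) (m : ℤ), (m : ℝ) + ∑ i, (a i : ℝ) * x i = 0 → ∀ i, a i = 0)
    (ε : ℝ) (hε : 0 < ε) (hε2 : ε ≤ 1/2) (N₀ : ℕ) :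
    ∃ n : ℕ, N₀ ≤ n ∧ ∀ i, |(n:ℝ) * x i - t i - round ((n:ℝ) * x i - t i)| < ε := by
  classical
  set q : ℝ := Real.cos (Real.pi * ε) ^ 2 with hqdef
  have hq0 : 0 ≤ q := sq_nonneg _
  have hq1 : q < 1 := by
    have hlt : Real.cos (Real.pi * ε) < 1 := by
      have h0 : Real.cos (Real.pi * ε) < Real.cos 0 := by
        apply Real.cos_lt_cos_of_nonneg_of_le_pi le_rfl
        · nlinarith [Real.pi_pos]
        · positivity
      simpa using h0
    have hge : 0 ≤ Real.cos (Real.pi * ε) := by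
      apply Real.cos_nonneg_of_mem_Icc
      constructor
      · nlinarith [Real.pi_pos]
      · nlinarith [Real.pi_pos]
    nlinarith
  -- choose p
  obtain ⟨p, hp1, hpq⟩ : ∃ p : ℕ, 1 ≤ p ∧ ((2*(p:ℝ)+1))^c * q^p < 1/2 := by
    rcases eq_or_lt_of_le hq0 with h0 | h0
    · exact ⟨1, le_rfl, by rw [← h0]; norm_num⟩
    · have hsum : Summable (fun n : ℕ => (n:ℝ)^c * q^n) := by
        have := summable_norm_pow_mul_geometric_of_norm_lt_one (R := ℝ) c
          (r := q) (by rwa [Real.norm_eq_abs, abs_of_pos h0])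
        exact this.of_norm
      have htend := hsum.tendsto_atTop_zero
      have h3 : (0:ℝ) < 1/(2 * 3^c) := by positivity
      obtain ⟨p, hplt, hp1⟩ := ((htend.eventually_lt_const h3).and
        (Filter.eventually_ge_atTop 1)).exists
      refine ⟨p, hp1, ?_⟩
      have hp1' : (1:ℝ) ≤ (p:ℝ) := by exact_mod_cast hp1
      have hhl : ((2*(p:ℝ)+1))^c ≤ (3*(p:ℝ))^c := by
        apply pow_le_pow_left₀ (by positivity)
        nlinarith
      calc ((2*(p:ℝ)+1))^c * q^p ≤ (3*(p:ℝ))^c * q^p := by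
             apply mul_le_mul_of_nonneg_right hhl (by positivity)
        _ = 3^c * ((p:ℝ)^c * q^p) := by rw [mul_pow]; ring
        _ < 3^c * (1/(2*3^c)) := by
             apply mul_lt_mul_of_pos_left hplt (by positivity)
        _ = 1/2 := by field_simp; try ring
  have hp0 : 0 < p := hp1
  -- definitions
  set coef : ℕ → ℝ := fun j => (Nat.choose (2*p) j : ℝ) * (4:ℝ)⁻¹^p with hcoefdef
  have hcoef0 : ∀ j, 0 ≤ coef j := fun j => by positivity
  set A : Finset (Fin c → ℕ) := Fintype.piFinset (fun _ => Finset.range (2*p+1)) with hAdef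
  set a₀ : Fin c → ℕ := fun _ => p with ha₀def
  have ha₀A : a₀ ∈ A := by
    rw [hAdef, Fintype.mem_piFinset]
    intro i
    simp only [ha₀def, Finset.mem_range]
    omega
  set β : (Fin c → ℕ) → ℝ := fun a => ∑ i, ((a i : ℝ) - p) * x i with hβdef
  set τ : (Fin c → ℕ) → ℝ := fun a => ∑ i, ((a i : ℝ) - p) * t i with hτdef
  set Ca : (Fin c → ℕ) → ℝ := fun a => ∏ i, coef (a i) with hCadef
  have hCa0 : ∀ a, 0 ≤ Ca a := fun a => Finset.prod_nonneg fun i _ => hcoef0 _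
  set F : ℕ → ℝ := fun n => ∏ i, (Real.cos (Real.pi * ((n:ℝ) * x i - t i)) ^ 2) ^ p with hFdef
  have hF0 : ∀ n, 0 ≤ F n := fun n => Finset.prod_nonneg fun i _ => by positivity
  have hF1 : ∀ n, F n ≤ 1 := by
    intro n
    apply Finset.prod_le_one
    · intro i _; positivity
    · intro i _
      have h1 := Real.neg_one_le_cos (Real.pi * ((n:ℝ) * x i - t i))
      have h2 := Real.cos_le_one (Real.pi * ((n:ℝ) * x i - t i))
      have h3 : Real.cos (Real.pi * ((n:ℝ) * x i - t i)) ^ 2 ≤ 1 := by nlinarith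
      exact pow_le_one₀ (sq_nonneg _) h3
  -- key expansion
  have key : ∀ n : ℕ, ((F n : ℝ) : ℂ) = ∑ a ∈ A, (Ca a : ℂ) * ee (- τ a) * ee (β a) ^ n := by
    intro n
    have e1 : ((F n : ℝ) : ℂ) =
        ∏ i, ((Real.cos (Real.pi * ((n:ℝ) * x i - t i)) ^ (2*p) : ℝ) : ℂ) := by
      rw [hFdef]
      push_cast
      exact Finset.prod_congr rfl fun i _ => by rw [← pow_mul]
    rw [e1]
    have e2 : ∀ i : Fin c, ((Real.cos (Real.pi * ((n:ℝ) * x i - t i)) ^ (2*p) : ℝ) : ℂ)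
        = ∑ j ∈ Finset.range (2*p+1),
            (Nat.choose (2*p) j : ℂ) * (4:ℂ)⁻¹ ^ p * ee (((j:ℝ) - p) * ((n:ℝ) * x i - t i)) :=
      fun i => cos_pow_expand p ((n:ℝ) * x i - t i)
    rw [Finset.prod_congr rfl fun i _ => e2 i, Finset.prod_univ_sum]
    refine Finset.sum_congr rfl fun a ha => ?_
    rw [Finset.prod_mul_distrib]
    have e3 : (∏ i : Fin c, ((Nat.choose (2*p) (a i) : ℂ) * (4:ℂ)⁻¹ ^ p)) = (Ca a : ℂ) := by
      rw [hCadef]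
      simp only [hcoefdef]
      push_cast
      rfl
    have e4 : (∏ i : Fin c, ee (((a i : ℝ) - p) * ((n:ℝ) * x i - t i)))
        = ee (- τ a) * ee (β a) ^ n := by
      rw [← ee_sum]
      have e5 : ∑ i : Fin c, ((a i : ℝ) - p) * ((n:ℝ) * x i - t i)
          = (n:ℝ) * β a + (- τ a) := by
        rw [hβdef, hτdef]
        rw [Finset.mul_sum, ← Finset.sum_neg_distrib, ← Finset.sum_add_distrib]
        exact Finset.sum_congr rfl fun i _ => by ring
      rw [e5, ee_add, ee_nat_mul]
      ring
    rw [e3, e4]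
    ring
  -- beta nonvanishing
  have geb : ∀ a ∈ A.erase a₀, ee (β a) ≠ 1 := by
    intro a ha hone
    obtain ⟨k, hk⟩ := (ee_eq_one_iff _).mp hone
    have hrel : ((-k : ℤ) : ℝ) + ∑ i, (((a i : ℤ) - p : ℤ) : ℝ) * x i = 0 := by
      push_cast
      rw [hβdef] at hk
      push_cast at hk
      linarith [hk]
    have hz := hx (fun i => (a i : ℤ) - p) (-k) hrel
    have hne : a ≠ a₀ := (Finset.mem_erase.mp ha).1
    apply hne
    funext i
    have h2 : (a i : ℤ) - p = 0 := hz i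
    show a i = p
    omega
  -- window sum lower bound
  set C : ℝ := ∑ a ∈ A.erase a₀, Ca a * (2 / ‖ee (β a) - 1‖) with hCdef
  have hCnn : 0 ≤ C := Finset.sum_nonneg fun a _ => by positivity
  have hwin : ∀ M N : ℕ, (N:ℝ) * Ca a₀ - C ≤ ∑ n ∈ Finset.Ico M (M+N), F n := by
    intro M N
    have hsum : ((∑ n ∈ Finset.Ico M (M+N), F n : ℝ) : ℂ)
        = ((N:ℝ) * Ca a₀ : ℝ)
          + ∑ a ∈ A.erase a₀,
              (Ca a : ℂ) * ee (- τ a) * (∑ n ∈ Finset.Ico M (M+N), ee (β a) ^ n) := by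
      push_cast
      rw [Finset.sum_congr rfl fun n _ => key n, Finset.sum_comm]
      rw [← Finset.add_sum_erase _ _ ha₀A]
      congr 1
      · have hβ0 : β a₀ = 0 := by
          rw [hβdef, ha₀def]; simp
        have hτ0 : τ a₀ = 0 := by
          rw [hτdef, ha₀def]; simp
        rw [hβ0, hτ0]
        simp [ee_zero, Nat.card_Ico]
        try ring
      · exact Finset.sum_congr rfl fun a _ => by rw [Finset.mul_sum]
    have habs : ‖(∑ a ∈ A.erase a₀,
        (Ca a : ℂ) * ee (- τ a) * (∑ n ∈ Finset.Ico M (M+N), ee (β a) ^ n))‖ ≤ C := by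
      refine le_trans (norm_sum_le _ _) ?_
      rw [hCdef]
      refine Finset.sum_le_sum fun a ha => ?_
      rw [norm_mul, norm_mul]
      have h1 : ‖((Ca a : ℂ))‖ = Ca a := by
        rw [Complex.norm_real, Real.norm_eq_abs, _root_.abs_of_nonneg (hCa0 a)]
      rw [h1, ee_abs, mul_one]
      apply mul_le_mul_of_nonneg_left _ (hCa0 a)
      have hz := geb a ha
      rw [geom_sum_Ico hz (Nat.le_add_right M N), norm_div]
      have hden : 0 < ‖ee (β a) - 1‖ :=
        norm_pos_iff.mpr (sub_ne_zero.mpr hz)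
      have hnum : ‖ee (β a) ^ (M+N) - ee (β a) ^ M‖ ≤ 2 := by
        have h3 := norm_sub_le (ee (β a) ^ (M+N)) (ee (β a) ^ M)
        rw [norm_pow, norm_pow, ee_abs] at h3
        norm_num at h3
        linarith
      gcongr
    have h1 : (∑ n ∈ Finset.Ico M (M+N), F n) = (N:ℝ) * Ca a₀
        + (∑ a ∈ A.erase a₀,
            (Ca a : ℂ) * ee (- τ a) * (∑ n ∈ Finset.Ico M (M+N), ee (β a) ^ n)).re := by
      have h2 := congrArg Complex.re hsum
      simpa using h2
    have h2 : -C ≤ (∑ a ∈ A.erase a₀,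
        (Ca a : ℂ) * ee (- τ a) * (∑ n ∈ Finset.Ico M (M+N), ee (β a) ^ n)).re := by
      have h3 := Complex.abs_re_le_norm (∑ a ∈ A.erase a₀,
        (Ca a : ℂ) * ee (- τ a) * (∑ n ∈ Finset.Ico M (M+N), ee (β a) ^ n))
      have h4 := (abs_le.mp (le_trans h3 habs)).1
      linarith
    linarith
  -- lower bound for the main coefficient
  have hCa₀ : Ca a₀ = coef p ^ c := by
    simp only [hCadef, ha₀def]
    rw [Finset.prod_const, Finset.card_univ, Fintype.card_fin]
  have hcoefp : 1/(2*(p:ℝ)+1) ≤ coef p := by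
    have h4 := Nat.four_pow_le_two_mul_self_mul_centralBinom p hp0
    have h4' : (4:ℝ)^p ≤ (2*(p:ℝ)+1) * (Nat.choose (2*p) p : ℝ) := by
      have h5 : (4:ℝ)^p ≤ 2*(p:ℝ) * (Nat.choose (2*p) p : ℝ) := by
        rw [Nat.centralBinom] at h4
        exact_mod_cast h4
      nlinarith [Nat.cast_nonneg (Nat.choose (2*p) p) (α := ℝ)]
    have hce : coef p = (Nat.choose (2*p) p : ℝ) / 4^p := by
      simp only [hcoefdef]
      rw [inv_pow]
      ring
    rw [hce, div_le_div_iff₀ (by positivity) (by positivity)]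
    nlinarith
  have hCa₀lb : 1 ≤ (2*(p:ℝ)+1)^c * Ca a₀ := by
    rw [hCa₀]
    calc (1:ℝ) = ((2*(p:ℝ)+1) * (1/(2*(p:ℝ)+1)))^c := by
          rw [mul_one_div, div_self (by positivity)]; rw [one_pow]
      _ = (2*(p:ℝ)+1)^c * (1/(2*(p:ℝ)+1))^c := mul_pow _ _ _
      _ ≤ (2*(p:ℝ)+1)^c * coef p ^ c := by
          apply mul_le_mul_of_nonneg_left
            (pow_le_pow_left₀ (by positivity) hcoefp c) (by positivity)
  have hqplt : q^p < Ca a₀ / 2 := by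
    have hP : (0:ℝ) < (2*(p:ℝ)+1)^c := by positivity
    have h1 : q^p < 1/(2*(2*(p:ℝ)+1)^c) := by
      rw [lt_div_iff₀ (by positivity)]
      calc q^p * (2*(2*(p:ℝ)+1)^c) = 2 * ((2*(p:ℝ)+1)^c * q^p) := by ring
        _ < 2 * (1/2) := by linarith
        _ = 1 := by norm_num
    have h2 : 1/(2*(2*(p:ℝ)+1)^c) ≤ Ca a₀/2 := by
      rw [div_le_div_iff₀ (by positivity) (by norm_num)]
      calc (1:ℝ) * 2 = 2 * 1 := by ring
        _ ≤ 2 * ((2*(p:ℝ)+1)^c * Ca a₀) := by linarith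
        _ = Ca a₀ * (2*(2*(p:ℝ)+1)^c) := by ring
    linarith
  have hqp0 : (0:ℝ) ≤ q^p := pow_nonneg hq0 p
  have hdpos : 0 < Ca a₀ - q^p := by linarith
  obtain ⟨N, hNgt⟩ := exists_nat_gt (C / (Ca a₀ - q^p))
  have hNC : C < (N:ℝ) * (Ca a₀ - q^p) := by
    rw [div_lt_iff₀ hdpos] at hNgt
    linarith
  have hex : ∃ n ∈ Finset.Ico N₀ (N₀+N), q^p < F n := by
    by_contra hcon
    push_neg at hcon
    have hle : ∑ n ∈ Finset.Ico N₀ (N₀+N), F n ≤ (N:ℝ) * q^p := by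
      calc ∑ n ∈ Finset.Ico N₀ (N₀+N), F n ≤ ∑ _n ∈ Finset.Ico N₀ (N₀+N), q^p :=
            Finset.sum_le_sum fun n hn => hcon n hn
        _ = (N:ℝ) * q^p := by
            rw [Finset.sum_const, Nat.card_Ico]
            simp [Nat.add_sub_cancel_left]
    have := hwin N₀ N
    linarith
  obtain ⟨n, hnmem, hgood⟩ := hex
  refine ⟨n, (Finset.mem_Ico.mp hnmem).1, fun i => ?_⟩
  have hfac : F n ≤ (Real.cos (Real.pi * ((n:ℝ) * x i - t i)) ^ 2) ^ p := by
    simp only [hFdef]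
    calc ∏ j : Fin c, (Real.cos (Real.pi * ((n:ℝ) * x j - t j)) ^ 2) ^ p
        = (Real.cos (Real.pi * ((n:ℝ) * x i - t i)) ^ 2) ^ p *
          ∏ j ∈ Finset.univ.erase i, (Real.cos (Real.pi * ((n:ℝ) * x j - t j)) ^ 2) ^ p :=
          (Finset.mul_prod_erase _ _ (Finset.mem_univ i)).symm
      _ ≤ (Real.cos (Real.pi * ((n:ℝ) * x i - t i)) ^ 2) ^ p * 1 := by
          have hprod : ∏ j ∈ Finset.univ.erase i,
              (Real.cos (Real.pi * ((n:ℝ) * x j - t j)) ^ 2) ^ p ≤ 1 := by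
            apply Finset.prod_le_one
            · intro j _; positivity
            · intro j _
              have hc1 := Real.neg_one_le_cos (Real.pi * ((n:ℝ) * x j - t j))
              have hc2 := Real.cos_le_one (Real.pi * ((n:ℝ) * x j - t j))
              have hc3 : Real.cos (Real.pi * ((n:ℝ) * x j - t j)) ^ 2 ≤ 1 := by nlinarith
              exact pow_le_one₀ (sq_nonneg _) hc3
          have hnn : (0:ℝ) ≤ (Real.cos (Real.pi * ((n:ℝ) * x i - t i)) ^ 2) ^ p := by
            positivity
          exact mul_le_mul_of_nonneg_left hprod hnn
      _ = (Real.cos (Real.pi * ((n:ℝ) * x i - t i)) ^ 2) ^ p := mul_one _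
  have hlt2 : q < Real.cos (Real.pi * ((n:ℝ) * x i - t i)) ^ 2 := by
    by_contra hc
    push_neg at hc
    have h5 := pow_le_pow_left₀ (sq_nonneg _) hc p
    linarith
  exact round_close hε hε2 hlt2

lemma dir_bound {c : ℕ} (v t : Fin c → ℝ) (hv : 0 < ‖v‖) (ht : 0 < ‖t‖) :
    ‖‖v‖⁻¹ • v - ‖t‖⁻¹ • t‖ ≤ 2 * ‖v - t‖ / ‖v‖ := by
  have hv' : ‖v‖ ≠ 0 := ne_of_gt hv
  have ht' : ‖t‖ ≠ 0 := ne_of_gt ht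
  have e : ‖v‖⁻¹ • v - ‖t‖⁻¹ • t = ‖v‖⁻¹ • (v - t) + (‖v‖⁻¹ - ‖t‖⁻¹) • t := by
    rw [smul_sub, sub_smul]
    abel
  rw [e]
  refine le_trans (norm_add_le _ _) ?_
  rw [norm_smul, norm_smul]
  have h1 : ‖(‖v‖⁻¹ : ℝ)‖ = ‖v‖⁻¹ := by
    rw [Real.norm_eq_abs, abs_of_pos (inv_pos.mpr hv)]
  have h2 : ‖(‖v‖⁻¹ - ‖t‖⁻¹ : ℝ)‖ * ‖t‖ ≤ ‖v - t‖ / ‖v‖ := by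
    rw [Real.norm_eq_abs, inv_sub_inv hv' ht', abs_div, abs_mul,
      abs_of_pos hv, abs_of_pos ht]
    rw [div_mul_eq_mul_div, mul_comm ‖v‖ ‖t‖, ← div_div, mul_div_assoc]
    rw [div_self ht', mul_one]
    have hnum : |‖t‖ - ‖v‖| ≤ ‖v - t‖ := by
      have h := abs_norm_sub_norm_le t v
      rwa [norm_sub_rev t v] at h
    gcongr
  have h3 : ‖v‖⁻¹ * ‖v - t‖ = ‖v - t‖ / ‖v‖ := by ring
  rw [h1, h3]
  have := h2
  have hnn : 0 ≤ ‖v - t‖ / ‖v‖ := by positivity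
  have h4 : 2 * ‖v - t‖ / ‖v‖ = ‖v - t‖ / ‖v‖ + ‖v - t‖ / ‖v‖ := by ring
  linarith

/-- Lemma 6.1 (Diophantine approximation via Kronecker's theorem). Here `Fin c → ℝ` carries
the sup-norm `‖·‖_∞`. The hypothesis `hind` says that `1, r₁, …, r_c` are linearly
independent over `ℚ`. -/
theorem stmt_6 (p₀ l c : ℕ) (hp₀ : 0 < p₀) (hl : 0 < l) (hc : 0 < c)
    (ε₁ : ℝ) (hε₁ : 0 < ε₁) (r : Fin c → ℝ)
    (hind : ∀ (q₀ : ℚ) (q : Fin c → ℚ),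
      (q₀ : ℝ) + ∑ i, (q i : ℝ) * r i = 0 → q₀ = 0 ∧ ∀ i, q i = 0)
    (e : Fin c → ℝ) (he : e ≠ 0) :
    ∃ (n₀ : ℕ) (r' : Fin c → ℝ), 0 < n₀ ∧ p₀ ∣ n₀ ∧
      (∀ i, ∃ m : ℤ, (n₀ : ℝ) * r' i = (l : ℝ) * m) ∧
      ‖r - r'‖ < ε₁ / n₀ ∧
      ‖(‖r - r'‖⁻¹ • (r - r')) - (‖e‖⁻¹ • e)‖ < ε₁ := by
  classical
  have hlR : (0:ℝ) < l := by exact_mod_cast hl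
  have hp₀R : (0:ℝ) < p₀ := by exact_mod_cast hp₀
  have hE : (0:ℝ) < ‖e‖ := norm_pos_iff.mpr he
  set u : Fin c → ℝ := ‖e‖⁻¹ • e with hudef
  have hu : ‖u‖ = 1 := by
    rw [hudef, norm_smul, Real.norm_eq_abs, abs_of_pos (inv_pos.mpr hE),
      inv_mul_cancel₀ (ne_of_gt hE)]
  set δ : ℝ := ε₁ / 2 with hδdef
  have hδ : 0 < δ := by positivity
  set η : ℝ := min (δ/2) (δ*ε₁/8) with hηdef
  have hη0 : 0 < η := by
    apply lt_min
    · positivity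
    · positivity
  have hη1 : η ≤ δ/2 := min_le_left _ _
  have hη2 : η ≤ δ*ε₁/8 := min_le_right _ _
  set x : Fin c → ℝ := fun i => (p₀:ℝ) * r i with hxdef
  have hx : ∀ (a : Fin c → ℤ) (m : ℤ), (m : ℝ) + ∑ i, (a i : ℝ) * x i = 0 → ∀ i, a i = 0 := by
    intro a m hrel i
    have hrel2 : (m : ℝ) + ∑ i, (a i : ℝ) * ((p₀:ℝ) * r i) = 0 := by
      simpa [hxdef] using hrel
    have h2 := (hind (m:ℚ) (fun i => (a i : ℚ) * (p₀:ℚ)) (by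
      push_cast
      rw [← hrel2]
      congr 1
      exact Finset.sum_congr rfl fun j _ => by ring)).2 i
    have hp₀Q : (p₀:ℚ) ≠ 0 := by exact_mod_cast hp₀.ne'
    have : (a i : ℚ) = 0 := by
      rcases mul_eq_zero.mp h2 with h | h
      · exact h
      · exact absurd h hp₀Q
    exact_mod_cast this
  set t' : Fin c → ℝ := fun i => δ * u i / l with ht'def
  set ε' : ℝ := min (η/l) (1/2) with hε'def
  have hε'0 : 0 < ε' := lt_min (by positivity) (by norm_num)
  have hε'2 : ε' ≤ 1/2 := min_le_right _ _
  have hε'η : (l:ℝ) * ε' ≤ η := by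
    have := min_le_left (η/l) (1/2)
    calc (l:ℝ) * ε' ≤ (l:ℝ) * (η/l) := by
          apply mul_le_mul_of_nonneg_left this (le_of_lt hlR)
      _ = η := by field_simp
  obtain ⟨n, hn1, hnapp⟩ := kron c x t' hx ε' hε'0 hε'2 1
  set m : Fin c → ℤ := fun i => round ((n:ℝ) * x i - t' i) with hmdef
  set n₀ : ℕ := p₀ * l * n with hn₀def
  have hn₀pos : 0 < n₀ := by
    apply Nat.mul_pos (Nat.mul_pos hp₀ hl) (lt_of_lt_of_le Nat.one_pos hn1)
  have hn₀R : (0:ℝ) < n₀ := by exact_mod_cast hn₀pos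
  set r' : Fin c → ℝ := fun i => (l:ℝ) * m i / n₀ with hr'def
  set v : Fin c → ℝ := fun i => (n₀:ℝ) * (r i - r' i) with hvdef
  set tvec : Fin c → ℝ := δ • u with htvecdef
  have htnorm : ‖tvec‖ = δ := by
    rw [htvecdef, norm_smul, Real.norm_eq_abs, abs_of_pos hδ, hu, mul_one]
  have hvt : ∀ i, v i - tvec i = (l:ℝ) * ((n:ℝ) * x i - t' i - m i) := by
    intro i
    have hn₀c : (n₀:ℝ) = (p₀:ℝ) * l * n := by
      rw [hn₀def]; push_cast; ring
    have hr'c : r' i = (l:ℝ) * m i / n₀ := rfl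
    have htc : t' i = δ * u i / l := rfl
    have htv : tvec i = δ * u i := rfl
    rw [hvdef]
    simp only [htv, hr'c, htc, hxdef]
    field_simp [hn₀c]
    rw [hn₀c]; ring
  have hwlt : ‖v - tvec‖ < η := by
    rw [pi_norm_lt_iff hη0]
    intro i
    have h1 : (v - tvec) i = (l:ℝ) * ((n:ℝ) * x i - t' i - m i) := by
      rw [Pi.sub_apply]; exact hvt i
    rw [h1, Real.norm_eq_abs, abs_mul, abs_of_pos hlR]
    calc (l:ℝ) * |(n:ℝ) * x i - t' i - m i| < (l:ℝ) * ε' := by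
          apply mul_lt_mul_of_pos_left _ hlR
          exact hnapp i
      _ ≤ η := hε'η
  have hvub : ‖v‖ < δ + η := by
    have hvsplit : v = tvec + (v - tvec) := by abel
    calc ‖v‖ = ‖tvec + (v - tvec)‖ := by rw [← hvsplit]
      _ ≤ ‖tvec‖ + ‖v - tvec‖ := norm_add_le _ _
      _ < δ + η := by rw [htnorm]; linarith
  have hvlb : δ - η < ‖v‖ := by
    have h1 : ‖tvec‖ - ‖v‖ ≤ ‖tvec - v‖ := norm_sub_norm_le tvec v
    rw [norm_sub_rev tvec v, htnorm] at h1
    linarith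
  have hvpos : 0 < ‖v‖ := by linarith
  have hD : r - r' = (n₀:ℝ)⁻¹ • v := by
    funext i
    rw [Pi.sub_apply, Pi.smul_apply, smul_eq_mul]
    simp only [hvdef]
    field_simp
  have hDnorm : ‖r - r'‖ = (n₀:ℝ)⁻¹ * ‖v‖ := by
    rw [hD, norm_smul, Real.norm_eq_abs, abs_of_pos (inv_pos.mpr hn₀R)]
  refine ⟨n₀, r', hn₀pos, ⟨l*n, by rw [hn₀def, mul_assoc]⟩, ?_, ?_, ?_⟩
  · intro i
    refine ⟨m i, ?_⟩
    simp only [hr'def]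
    field_simp
  · rw [hDnorm, div_eq_mul_inv, mul_comm ε₁ ((n₀:ℝ)⁻¹)]
    apply mul_lt_mul_of_pos_left _ (inv_pos.mpr hn₀R)
    have : δ + η ≤ 3*ε₁/4 := by
      rw [hδdef] at hη1 ⊢
      linarith
    linarith
  · have hdirEq : ‖r - r'‖⁻¹ • (r - r') = ‖v‖⁻¹ • v := by
      rw [hDnorm, hD, smul_smul]
      congr 1
      rw [mul_inv]
      field_simp
    have hueq : u = ‖tvec‖⁻¹ • tvec := by
      rw [htnorm, htvecdef, smul_smul, inv_mul_cancel₀ (ne_of_gt hδ), one_smul]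
    rw [hdirEq, hueq]
    have htpos : 0 < ‖tvec‖ := by rw [htnorm]; exact hδ
    have hb := dir_bound v tvec hvpos htpos
    have hfin : 2 * ‖v - tvec‖ / ‖v‖ < ε₁ := by
      rw [div_lt_iff₀ hvpos]
      have hv2 : δ/2 ≤ ‖v‖ := by linarith
      calc 2*‖v - tvec‖ < 2*η := by linarith
        _ ≤ δ*ε₁/4 := by linarith
        _ = (δ/2) * (ε₁/2) := by ring
        _ ≤ ‖v‖ * (ε₁/2) := by
            apply mul_le_mul_of_nonneg_right hv2 (by positivity)
        _ < ‖v‖ * ε₁ := by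
            apply mul_lt_mul_of_pos_left _ hvpos
            linarith
        _ = ε₁ * ‖v‖ := by ring
    linarith
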